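/- Suppose M satisfies the D-RIP with constant δ := δ_{(3ζ+1)k} < 1. Let T̃ be a support of size at most 3ζk and T the support of x of size at most k, and let x_p = D(MD_{T̃})^† y with y = Mx + e. Then ‖P_{T̃}(x_p − x)‖₂ ≤ δ ‖x_p − x‖₂ + ‖P_{T̃} M* e‖₂, where P_{T̃} is the orthogonal projection onto range(D_{T̃}). -/

import Mathlib

open Matrix
open scoped Classical

noncomputable section

/-- `α` has at most `k` nonzero entries. -/
def sparse {n : ℕ} (k : ℕ) (α : EuclideanSpace ℝ (Fin n)) : Prop :=
  (Finset.univ.filter fun i => α i ≠ 0).card ≤ k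

/-- The D-RIP of order `k` with constant `δ`:
`(1-δ)‖Dα‖² ≤ ‖MDα‖² ≤ (1+δ)‖Dα‖²` for all `k`-sparse `α`. -/
def DRIP {m d n : ℕ} (M : Matrix (Fin m) (Fin d) ℝ) (D : Matrix (Fin d) (Fin n) ℝ)
    (k : ℕ) (δ : ℝ) : Prop :=
  ∀ α : EuclideanSpace ℝ (Fin n), sparse k α →
    (1 - δ) * ‖Matrix.toEuclideanLin D α‖ ^ 2 ≤
        ‖Matrix.toEuclideanLin M (Matrix.toEuclideanLin D α)‖ ^ 2 ∧
      ‖Matrix.toEuclideanLin M (Matrix.toEuclideanLin D α)‖ ^ 2 ≤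
        (1 + δ) * ‖Matrix.toEuclideanLin D α‖ ^ 2

/-- The span of the columns of `D` indexed by `T`, i.e. `range(D_T)`. -/
def colSpan {d n : ℕ} (D : Matrix (Fin d) (Fin n) ℝ) (T : Finset (Fin n)) :
    Submodule ℝ (EuclideanSpace ℝ (Fin d)) :=
  Submodule.span ℝ
    {v : EuclideanSpace ℝ (Fin d) | ∃ i ∈ T, v = (WithLp.equiv 2 (Fin d → ℝ)).symm (fun j => D j i)}

/-- The orthogonal projection onto a subspace `K`, as a map of the whole space. -/
def projOnto {d : ℕ} (K : Submodule ℝ (EuclideanSpace ℝ (Fin d))) :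
    EuclideanSpace ℝ (Fin d) →L[ℝ] EuclideanSpace ℝ (Fin d) :=
  K.subtypeL.comp K.orthogonalProjectionOnto

open scoped RealInnerProductSpace

lemma toEuclideanLin_eq_sum' {d n : ℕ} (D : Matrix (Fin d) (Fin n) ℝ)
    (β : EuclideanSpace ℝ (Fin n)) :
    Matrix.toEuclideanLin D β =
      ∑ i : Fin n, β i • (WithLp.equiv 2 (Fin d → ℝ)).symm (fun j => D j i) := by
  apply (WithLp.linearEquiv 2 ℝ (Fin d → ℝ)).injective
  rw [map_sum]
  funext j
  rw [Finset.sum_apply]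
  show (D *ᵥ fun i => β i) j = _
  simp only [Matrix.mulVec, dotProduct]
  simp [mul_comm]

lemma mem_colSpan_iff' {d n : ℕ} (D : Matrix (Fin d) (Fin n) ℝ) (T : Finset (Fin n))
    (v : EuclideanSpace ℝ (Fin d)) :
    v ∈ colSpan D T ↔ ∃ β : EuclideanSpace ℝ (Fin n),
      (∀ i ∉ T, β i = 0) ∧ v = Matrix.toEuclideanLin D β := by
  constructor
  · intro hv
    induction hv using Submodule.span_induction with
    | mem w hw =>
      obtain ⟨i, hi, rfl⟩ := hw
      refine ⟨EuclideanSpace.single i 1, ?_, ?_⟩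
      · intro j hj
        simp [EuclideanSpace.single_apply]
        rintro rfl; exact hj hi
      · ext j
        symm
        simp [Matrix.toEuclideanLin_apply, Matrix.mulVec, dotProduct,
          EuclideanSpace.single_apply]
    | zero => exact ⟨0, by simp, by simp⟩
    | add w₁ w₂ _ _ h1 h2 =>
      obtain ⟨β₁, hβ₁, rfl⟩ := h1
      obtain ⟨β₂, hβ₂, rfl⟩ := h2
      exact ⟨β₁ + β₂, fun i hi => by simp [hβ₁ i hi, hβ₂ i hi], by simp⟩
    | smul c w _ h =>
      obtain ⟨β, hβ, rfl⟩ := h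
      exact ⟨c • β, fun i hi => by simp [hβ i hi], by simp⟩
  · rintro ⟨β, hβ, rfl⟩
    rw [toEuclideanLin_eq_sum']
    apply Submodule.sum_mem
    intro i _
    by_cases hi : i ∈ T
    · exact Submodule.smul_mem _ _ (Submodule.subset_span ⟨i, hi, rfl⟩)
    · simp [hβ i hi]

lemma rip_bilinear' {E F : Type*} [NormedAddCommGroup E] [InnerProductSpace ℝ E]
    [NormedAddCommGroup F] [InnerProductSpace ℝ F]
    (A : E →ₗ[ℝ] F) (δ : ℝ) (u v : E)
    (h : ∀ a b : ℝ, (1 - δ) * ‖a • u + b • v‖ ^ 2 ≤ ‖A (a • u + b • v)‖ ^ 2 ∧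
          ‖A (a • u + b • v)‖ ^ 2 ≤ (1 + δ) * ‖a • u + b • v‖ ^ 2) :
    ⟪u, v⟫ - ⟪A u, A v⟫ ≤ δ * (‖u‖ * ‖v‖) := by
  rcases eq_or_ne u 0 with rfl | hu
  · simp
  rcases eq_or_ne v 0 with rfl | hv
  · simp
  set a : ℝ := ‖v‖ with ha'
  set b : ℝ := ‖u‖ with hb'
  have ha : 0 < a := norm_pos_iff.mpr hv
  have hb : 0 < b := norm_pos_iff.mpr hu
  have h1 := (h a b).1
  have h2 := (h a (-b)).2
  rw [show a • u + (-b) • v = a • u - b • v by rw [neg_smul, sub_eq_add_neg]] at h2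
  rw [show A (a • u + b • v) = a • A u + b • A v by simp] at h1
  rw [show A (a • u - b • v) = a • A u - b • A v by simp] at h2
  have np1 : ‖a • u + b • v‖ ^ 2 = a^2 * ‖u‖^2 + 2*a*b*⟪u,v⟫ + b^2*‖v‖^2 := by
    rw [@norm_add_sq_real, real_inner_smul_left, real_inner_smul_right, norm_smul, norm_smul,
      mul_pow, mul_pow, Real.norm_eq_abs, Real.norm_eq_abs, sq_abs, sq_abs]; ring
  have np2 : ‖a • A u + b • A v‖ ^ 2 = a^2 * ‖A u‖^2 + 2*a*b*⟪A u, A v⟫ + b^2*‖A v‖^2 := by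
    rw [@norm_add_sq_real, real_inner_smul_left, real_inner_smul_right, norm_smul, norm_smul,
      mul_pow, mul_pow, Real.norm_eq_abs, Real.norm_eq_abs, sq_abs, sq_abs]; ring
  have nm1 : ‖a • u - b • v‖ ^ 2 = a^2 * ‖u‖^2 - 2*a*b*⟪u,v⟫ + b^2*‖v‖^2 := by
    rw [@norm_sub_sq_real, real_inner_smul_left, real_inner_smul_right, norm_smul, norm_smul,
      mul_pow, mul_pow, Real.norm_eq_abs, Real.norm_eq_abs, sq_abs, sq_abs]; ring
  have nm2 : ‖a • A u - b • A v‖ ^ 2 = a^2 * ‖A u‖^2 - 2*a*b*⟪A u, A v⟫ + b^2*‖A v‖^2 := by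
    rw [@norm_sub_sq_real, real_inner_smul_left, real_inner_smul_right, norm_smul, norm_smul,
      mul_pow, mul_pow, Real.norm_eq_abs, Real.norm_eq_abs, sq_abs, sq_abs]; ring
  rw [np1, np2] at h1
  rw [nm1, nm2] at h2
  rw [← ha', ← hb'] at h1 h2
  have key : 4*(a*b)*(⟪u,v⟫ - ⟪A u, A v⟫) ≤ 4*δ*(a*b)^2 := by nlinarith [h1, h2]
  nlinarith [key, mul_pos ha hb]

set_option maxHeartbeats 1000000 in
/-- Suppose `M` satisfies the D-RIP of order `(3ζ+1)k` with constant
`δ < 1`. Let `T̃` be a support of size at most `3ζk`, `T` the support of `x = Dα` with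
`|T| ≤ k`, and `x_p` the constrained least-squares estimate on `T̃` from `y = Mx + e`. Then
`‖P_{T̃}(x_p − x)‖₂ ≤ δ‖x_p − x‖₂ + ‖P_{T̃} M* e‖₂`. -/
theorem stmt12 {m d n ζ k : ℕ} (hζ : 1 ≤ ζ)
    (M : Matrix (Fin m) (Fin d) ℝ) (D : Matrix (Fin d) (Fin n) ℝ)
    (δ : ℝ) (hδ : δ < 1) (hrip : DRIP M D ((3 * ζ + 1) * k) δ)
    (Ttil : Finset (Fin n)) (hTtil : Ttil.card ≤ 3 * ζ * k)
    (T : Finset (Fin n)) (hT : T.card ≤ k)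
    (α : EuclideanSpace ℝ (Fin n)) (hα : ∀ i ∉ T, α i = 0)
    (x : EuclideanSpace ℝ (Fin d)) (hx : x = Matrix.toEuclideanLin D α)
    (e : EuclideanSpace ℝ (Fin m)) (y : EuclideanSpace ℝ (Fin m))
    (hy : y = Matrix.toEuclideanLin M x + e)
    (xp : EuclideanSpace ℝ (Fin d))
    -- `x_p` is a minimizer of the constrained least-squares problem on `T̃`
    (hxp : ∃ αp : EuclideanSpace ℝ (Fin n), (∀ i ∉ Ttil, αp i = 0) ∧
      xp = Matrix.toEuclideanLin D αp ∧
      ∀ β : EuclideanSpace ℝ (Fin n), (∀ i ∉ Ttil, β i = 0) →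
        ‖y - Matrix.toEuclideanLin M xp‖ ≤
          ‖y - Matrix.toEuclideanLin M (Matrix.toEuclideanLin D β)‖) :
    ‖projOnto (colSpan D Ttil) (xp - x)‖ ≤
      δ * ‖xp - x‖ + ‖projOnto (colSpan D Ttil) (Matrix.toEuclideanLin Mᴴ e)‖ := by
  obtain ⟨αp, hαp, hxpD, hmin⟩ := hxp
  set K := colSpan D Ttil with hK
  set A := Matrix.toEuclideanLin M with hA
  set w := xp - x with hwdef
  set γ : EuclideanSpace ℝ (Fin n) := αp - α with hγ
  have hγsupp : ∀ i ∉ Ttil ∪ T, γ i = 0 := by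
    intro i hi
    simp only [Finset.mem_union, not_or] at hi
    simp [hγ, hαp i hi.1, hα i hi.2]
  have hwD : w = Matrix.toEuclideanLin D γ := by
    rw [hwdef, hxpD, hx, hγ, map_sub]
  have hcard : (Ttil ∪ T).card ≤ (3*ζ+1)*k := by
    calc (Ttil ∪ T).card ≤ Ttil.card + T.card := Finset.card_union_le _ _
    _ ≤ 3*ζ*k + k := Nat.add_le_add hTtil hT
    _ = (3*ζ+1)*k := by ring
  have hripS : ∀ β : EuclideanSpace ℝ (Fin n), (∀ i ∉ Ttil ∪ T, β i = 0) →
      (1-δ)*‖Matrix.toEuclideanLin D β‖^2 ≤ ‖A (Matrix.toEuclideanLin D β)‖^2 ∧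
      ‖A (Matrix.toEuclideanLin D β)‖^2 ≤ (1+δ)*‖Matrix.toEuclideanLin D β‖^2 := by
    intro β hβ
    apply hrip
    refine le_trans (Finset.card_le_card ?_) hcard
    intro i hi
    simp only [Finset.mem_filter] at hi
    by_contra hmem
    exact hi.2 (hβ i hmem)
  rcases eq_or_ne w 0 with hw0 | hw0
  · rw [hw0]
    simp only [map_zero, norm_zero, mul_zero, zero_add]
    exact norm_nonneg _
  have hwne : Matrix.toEuclideanLin D γ ≠ 0 := hwD ▸ hw0
  have hδ0 : 0 ≤ δ := by
    obtain ⟨h1, h2⟩ := hripS γ hγsupp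
    have hn : 0 < ‖Matrix.toEuclideanLin D γ‖^2 :=
      pow_pos (norm_pos_iff.mpr hwne) 2
    nlinarith
  -- orthogonality of the residual
  have horth : ∀ v ∈ K, ⟪A v, y - A xp⟫ = 0 := by
    intro v hv
    obtain ⟨β, hβ, rfl⟩ := (mem_colSpan_iff' D Ttil v).mp hv
    set r := y - A xp with hr
    clear_value r
    set s := ⟪A (Matrix.toEuclideanLin D β), r⟫ with hs
    set N := ‖A (Matrix.toEuclideanLin D β)‖^2 with hN
    have hkey : ∀ t : ℝ, 2*(t*s) ≤ t^2*N := by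
      intro t
      have hsupp : ∀ i ∉ Ttil, (αp + t • β) i = 0 := by
        intro i hi; simp [hαp i hi, hβ i hi]
      have hle := hmin (αp + t • β) hsupp
      have hD : Matrix.toEuclideanLin D (αp + t • β) =
          xp + t • Matrix.toEuclideanLin D β := by
        rw [map_add, _root_.map_smul, hxpD]
      rw [hD] at hle
      have hre : y - A (xp + t • Matrix.toEuclideanLin D β) =
          r - t • (A (Matrix.toEuclideanLin D β)) := by
        rw [map_add, _root_.map_smul, hr]; abel
      rw [hre] at hle
      have hsq := pow_le_pow_left₀ (norm_nonneg _) hle 2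
      have hexp : ‖r - t • A (Matrix.toEuclideanLin D β)‖^2 =
          ‖r‖^2 - 2*(t*s) + t^2*N := by
        rw [@norm_sub_sq_real, real_inner_smul_right, norm_smul, mul_pow,
          Real.norm_eq_abs, sq_abs, hs, hN, real_inner_comm]
      rw [hexp] at hsq
      linarith
    have hN0 : 0 ≤ N := by rw [hN]; positivity
    have h1 : (0:ℝ) < N+1 := by linarith
    have ht := hkey (s/(N+1))
    have ht' := mul_le_mul_of_nonneg_right ht (le_of_lt (pow_pos h1 2))
    have e1 : 2 * (s/(N+1)*s) * (N+1)^2 = 2*s^2*(N+1) := by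
      field_simp
    have e2 : ((s/(N+1))^2*N) * (N+1)^2 = s^2*N := by
      field_simp
    rw [e1, e2] at ht'
    have hs2 : s^2 ≤ 0 := by nlinarith [ht', hN0, sq_nonneg s]
    exact pow_eq_zero_iff two_ne_zero |>.mp (le_antisymm hs2 (sq_nonneg s))
  set u := projOnto K w with hu
  have hu' : u = ((K.orthogonalProjectionOnto w : K) : EuclideanSpace ℝ (Fin d)) := rfl
  have huK : u ∈ K := hu' ▸ Submodule.coe_mem _
  have hproj : ∀ z : EuclideanSpace ℝ (Fin d), ∀ q ∈ K, ⟪q, z - projOnto K z⟫ = 0 := by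
    intro z q hq
    have hmem := Submodule.sub_starProjection_mem_orthogonal (K := K) z
    exact (Submodule.mem_orthogonal K _).mp hmem q hq
  have e_uw : ⟪u, u⟫ = ⟪u, w⟫ := by
    have := hproj w u huK
    rw [inner_sub_right] at this
    linarith
  -- u lies in the larger column span
  have hmono : K ≤ colSpan D (Ttil ∪ T) := by
    apply Submodule.span_mono
    rintro v ⟨i, hi, rfl⟩
    exact ⟨i, Finset.mem_union_left _ hi, rfl⟩
  obtain ⟨β₁, hβ₁, huD⟩ := (mem_colSpan_iff' D (Ttil ∪ T) u).mp (hmono huK)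
  have hbil : ⟪u, w⟫ - ⟪A u, A w⟫ ≤ δ * (‖u‖ * ‖w‖) := by
    apply rip_bilinear'
    intro a b
    have hsupp : ∀ i ∉ Ttil ∪ T, (a • β₁ + b • γ) i = 0 := fun i hi => by
      simp [hβ₁ i hi, hγsupp i hi]
    have hcomb : a • u + b • w = Matrix.toEuclideanLin D (a • β₁ + b • γ) := by
      rw [map_add, _root_.map_smul, _root_.map_smul, ← huD, ← hwD]
    rw [hcomb]
    exact hripS _ hsupp
  have hadj : ∀ (q : EuclideanSpace ℝ (Fin d)),
      ⟪Matrix.toEuclideanLin Mᴴ e, q⟫ = ⟪e, A q⟫ := by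
    intro q
    rw [hA, Matrix.toEuclideanLin_conjTranspose_eq_adjoint, LinearMap.adjoint_inner_left]
  have horthu : ⟪A u, A w⟫ = ⟪u, projOnto K (Matrix.toEuclideanLin Mᴴ e)⟫ := by
    have h0 := horth u huK
    have hyx : y - A xp = e - A w := by
      rw [hy, hwdef, map_sub]; abel
    rw [hyx, inner_sub_right] at h0
    have he : ⟪A u, e⟫ = ⟪u, Matrix.toEuclideanLin Mᴴ e⟫ :=
      (real_inner_comm _ _).trans ((hadj u).symm.trans (real_inner_comm _ _))
    have hP : ⟪u, Matrix.toEuclideanLin Mᴴ e⟫ =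
        ⟪u, projOnto K (Matrix.toEuclideanLin Mᴴ e)⟫ := by
      have := hproj (Matrix.toEuclideanLin Mᴴ e) u huK
      rw [inner_sub_right] at this
      linarith
    linarith
  have hCS : ⟪u, projOnto K (Matrix.toEuclideanLin Mᴴ e)⟫ ≤
      ‖u‖ * ‖projOnto K (Matrix.toEuclideanLin Mᴴ e)‖ := real_inner_le_norm _ _
  have hnorm : ⟪u, u⟫ = ‖u‖^2 := real_inner_self_eq_norm_sq u
  have hfin : ‖u‖^2 ≤ δ*(‖u‖*‖w‖) + ‖u‖*‖projOnto K (Matrix.toEuclideanLin Mᴴ e)‖ := by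
    linarith [hbil, horthu, hCS, e_uw, hnorm]
  rcases eq_or_lt_of_le (norm_nonneg u) with h0 | hpos
  · rw [← h0]
    have := mul_nonneg hδ0 (norm_nonneg w)
    linarith [norm_nonneg (projOnto K (Matrix.toEuclideanLin Mᴴ e))]
  · nlinarith [hfin, hpos]

end
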